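/- Let x ∈ ℝ^n with x ≥ 0, A x = b, r_m = min_i x_i, and let K₊ = {v : A v = b, v ≥ 0} be bounded with C' = sup_{v∈K₊} ‖v − x‖_∞ < ∞. Let X̃ = x + η with η having i.i.d. Laplace(λ) coordinates, and let P₊ be the Euclidean projection onto K₊. Then ‖E[P₊(X̃) − x]‖_∞ ≤ C' · exp(−r_m/λ) · Σ_{i=0}^{n−1} r_m^i/(i!·λ^i). -/

import Mathlib

open MeasureTheory ProbabilityTheory

/-- Euclidean (ℓ²) norm on `Fin n → ℝ`. -/
noncomputable def l2norm {n : ℕ} (y : Fin n → ℝ) : ℝ := Real.sqrt (∑ i, (y i) ^ 2)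

/-- The Laplace distribution with location 0 and scale `l`. -/
noncomputable def laplaceMeasure (l : ℝ) : Measure ℝ :=
  volume.withDensity (fun x => ENNReal.ofReal ((2 * l)⁻¹ * Real.exp (-|x| / l)))

namespace BiasAux
open Real Set Filter Topology

lemma integrableOn_exp_Ioi {l : ℝ} (hl : 0 < l) (a : ℝ) :
    IntegrableOn (fun s => Real.exp (-s / l)) (Ioi a) := by
  have h := exp_neg_integrableOn_Ioi a (inv_pos.2 hl)
  refine h.congr_fun (fun s _ => ?_) measurableSet_Ioi
  rw [neg_div, div_eq_inv_mul]; simp only [neg_mul]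

lemma integral_exp_Ioi {l : ℝ} (hl : 0 < l) (a : ℝ) :
    ∫ s in Ioi a, Real.exp (-s / l) = l * Real.exp (-a / l) := by
  have hderiv : ∀ s ∈ Ici a, HasDerivAt (fun u => -(l * Real.exp (-u / l)))
      (Real.exp (-s / l)) s := by
    intro s _
    have h1 : HasDerivAt (fun u : ℝ => -u / l) (-1 / l) s := by
      simpa using (hasDerivAt_id s).neg.div_const l
    have h2 := (h1.exp.const_mul l).neg
    refine h2.congr_deriv ?_
    field_simp
  have htend : Tendsto (fun u : ℝ => -(l * Real.exp (-u / l))) atTop (𝓝 0) := by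
    have h3 : Tendsto (fun u : ℝ => u / l) atTop atTop :=
      tendsto_id.atTop_div_const hl
    have h4 : Tendsto (fun u : ℝ => Real.exp (-(u / l))) atTop (𝓝 0) :=
      Real.tendsto_exp_neg_atTop_nhds_zero.comp h3
    have : Tendsto (fun u : ℝ => -(l * Real.exp (-u / l))) atTop (𝓝 (-(l * 0))) := by
      refine Tendsto.neg (Tendsto.const_mul l ?_)
      simpa [neg_div] using h4
    simpa using this
  have := integral_Ioi_of_hasDerivAt_of_tendsto' hderiv (integrableOn_exp_Ioi hl a) htend
  rw [this]; ring

lemma integrable_comp_abs {g : ℝ → ℝ} (hg : IntegrableOn g (Ioi 0))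
    (hm : AEStronglyMeasurable (fun t : ℝ => g |t|) volume) :
    Integrable (fun t : ℝ => g |t|) := by
  have int_Ioi : IntegrableOn (fun t : ℝ => g |t|) (Ioi 0) := by
    refine hg.congr_fun (fun s hs => ?_) measurableSet_Ioi
    rw [abs_of_pos hs]
  have int_Iic : IntegrableOn (fun t : ℝ => g |t|) (Iic 0) := by
    rw [← Measure.map_neg_eq_self (volume : Measure ℝ)]
    have m : MeasurableEmbedding fun x : ℝ => -x := (Homeomorph.neg ℝ).measurableEmbedding
    rw [m.integrableOn_map_iff]
    simp_rw [Function.comp_def, abs_neg, neg_preimage, neg_Iic, neg_zero]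
    exact (integrableOn_Ici_iff_integrableOn_Ioi).mpr int_Ioi
  have := int_Iic.union int_Ioi
  rwa [Iic_union_Ioi, integrableOn_univ] at this

lemma lapD_cont {l : ℝ} : Continuous (fun t : ℝ => (2 * l)⁻¹ * Real.exp (-|t| / l)) := by
  fun_prop

lemma integrable_lapD {l : ℝ} (hl : 0 < l) :
    Integrable (fun t : ℝ => (2 * l)⁻¹ * Real.exp (-|t| / l)) := by
  have : Integrable (fun t : ℝ => (fun s => (2 * l)⁻¹ * Real.exp (-s / l)) |t|) := by
    refine integrable_comp_abs ((integrableOn_exp_Ioi hl 0).const_mul _) ?_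
    exact lapD_cont.aestronglyMeasurable
  exact this

lemma integral_lapD {l : ℝ} (hl : 0 < l) :
    ∫ t : ℝ, (2 * l)⁻¹ * Real.exp (-|t| / l) = 1 := by
  have : ∫ t : ℝ, (fun s => (2 * l)⁻¹ * Real.exp (-s / l)) |t|
      = 2 * ∫ s in Ioi (0:ℝ), (2 * l)⁻¹ * Real.exp (-s / l) := integral_comp_abs (f := fun s => (2 * l)⁻¹ * Real.exp (-s / l))
  simp only at this
  rw [this, integral_const_mul, integral_exp_Ioi hl 0]
  field_simp; simp

lemma isProbabilityMeasure_laplace {l : ℝ} (hl : 0 < l) :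
    IsProbabilityMeasure (laplaceMeasure l) := by
  constructor
  rw [laplaceMeasure, withDensity_apply _ MeasurableSet.univ, setLIntegral_univ,
    ← ofReal_integral_eq_lintegral_ofReal (integrable_lapD hl)]
  · rw [integral_lapD hl]; simp
  · filter_upwards with t
    positivity


noncomputable def tailSum (l : ℝ) (n : ℕ) (r : ℝ) : ℝ :=
  Real.exp (-r / l) * ∑ k ∈ Finset.range n, r ^ k / (k.factorial * l ^ k)

noncomputable def q (l : ℝ) (n : ℕ) (r : ℝ) : ℝ := if 0 ≤ r then tailSum l n r else 1

lemma tailSum_nonneg {l : ℝ} (hl : 0 < l) {n : ℕ} {r : ℝ} (hr : 0 ≤ r) :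
    0 ≤ tailSum l n r := by
  unfold tailSum
  have : 0 ≤ ∑ k ∈ Finset.range n, r ^ k / (k.factorial * l ^ k) := by
    refine Finset.sum_nonneg fun k _ => ?_
    positivity
  positivity

lemma tailSum_le_one {l : ℝ} (hl : 0 < l) {n : ℕ} {r : ℝ} (hr : 0 ≤ r) :
    tailSum l n r ≤ 1 := by
  unfold tailSum
  have h1 : ∑ k ∈ Finset.range n, r ^ k / (k.factorial * l ^ k)
      ≤ Real.exp (r / l) := by
    have h2 : ∀ k ∈ Finset.range n, r ^ k / ((k.factorial : ℝ) * l ^ k)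
        = (r / l) ^ k / k.factorial := by
      intro k _
      rw [div_pow]
      field_simp
    rw [Finset.sum_congr rfl h2]
    exact Real.sum_le_exp_of_nonneg (by positivity) n
  calc Real.exp (-r / l) * ∑ k ∈ Finset.range n, r ^ k / (k.factorial * l ^ k)
      ≤ Real.exp (-r / l) * Real.exp (r / l) := by
        exact mul_le_mul_of_nonneg_left h1 (Real.exp_nonneg _)
    _ = 1 := by rw [← Real.exp_add]; simp [neg_div]

lemma q_nonneg {l : ℝ} (hl : 0 < l) (n : ℕ) (r : ℝ) : 0 ≤ q l n r := by
  unfold q; split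
  · exact tailSum_nonneg hl ‹_›
  · norm_num

lemma q_le_one {l : ℝ} (hl : 0 < l) (n : ℕ) (r : ℝ) : q l n r ≤ 1 := by
  unfold q; split
  · exact tailSum_le_one hl ‹_›
  · exact le_refl 1

lemma measurable_q {l : ℝ} (n : ℕ) : Measurable (q l n) := by
  unfold q
  refine Measurable.ite measurableSet_Ici ?_ measurable_const
  have : Continuous (tailSum l n) := by
    unfold tailSum
    fun_prop
  exact this.measurable

lemma eqon_Ioc {l : ℝ} (hl : 0 < l) (n : ℕ) {r : ℝ} :
    EqOn (fun s => Real.exp (-s / l) * q l n (r - s))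
      (fun s => Real.exp (-r / l) * ∑ k ∈ Finset.range n, (r - s) ^ k / (k.factorial * l ^ k))
      (Ioc 0 r) := by
  intro s hs
  have h1 : 0 ≤ r - s := by simp [hs.2]
  simp only [q, if_pos h1, tailSum]
  rw [← mul_assoc, ← Real.exp_add]
  have h3 : -s / l + -(r - s) / l = -r / l := by rw [← add_div]; ring_nf
  rw [h3]

lemma integrableOn_piece1 {l : ℝ} (hl : 0 < l) (n : ℕ) {r : ℝ} :
    IntegrableOn (fun s => Real.exp (-s / l) * q l n (r - s)) (Ioc 0 r) := by
  have hc : Continuous (fun s => Real.exp (-r / l) *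
      ∑ k ∈ Finset.range n, (r - s) ^ k / (k.factorial * l ^ k)) := by fun_prop
  exact (hc.integrableOn_Ioc).congr_fun (fun s hs => (eqon_Ioc hl n hs).symm) measurableSet_Ioc

lemma integrableOn_piece2 {l : ℝ} (hl : 0 < l) (n : ℕ) {r : ℝ} :
    IntegrableOn (fun s => Real.exp (-s / l) * q l n (r - s)) (Ioi r) := by
  refine (integrableOn_exp_Ioi hl r).congr_fun (fun s hs => ?_) measurableSet_Ioi
  have h4 : ¬ (0 ≤ r - s) := by simp at hs ⊢; linarith
  simp only [q, if_neg h4, mul_one]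

lemma key_integral {l : ℝ} (hl : 0 < l) (n : ℕ) {r : ℝ} (hr : 0 ≤ r) :
    ∫ s in Ioi (0:ℝ), Real.exp (-s / l) * q l n (r - s) = l * tailSum l (n + 1) r := by
  have hsplit : Ioc (0:ℝ) r ∪ Ioi r = Ioi 0 := Ioc_union_Ioi_eq_Ioi hr
  rw [← hsplit, setIntegral_union (Ioc_disjoint_Ioi le_rfl) measurableSet_Ioi
    (integrableOn_piece1 hl n) (integrableOn_piece2 hl n)]
  have h2 : ∫ s in Ioi r, Real.exp (-s / l) * q l n (r - s) = l * Real.exp (-r / l) := by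
    rw [setIntegral_congr_fun measurableSet_Ioi (g := fun s => Real.exp (-s / l))
      (fun s hs => by
        have h4 : ¬ (0 ≤ r - s) := by simp at hs ⊢; linarith
        simp only [q, if_neg h4, mul_one])]
    exact integral_exp_Ioi hl r
  have h1 : ∫ s in Ioc (0:ℝ) r, Real.exp (-s / l) * q l n (r - s)
      = Real.exp (-r / l) * ∑ k ∈ Finset.range n, r ^ (k+1) / ((k+1) * (k.factorial * l ^ k)) := by
    rw [setIntegral_congr_fun measurableSet_Ioc (eqon_Ioc hl n)]
    rw [integral_const_mul]
    congr 1
    rw [integral_finset_sum _ (fun k _ => by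
      have : Continuous fun s : ℝ => (r - s) ^ k / (k.factorial * l ^ k) := by fun_prop
      exact this.integrableOn_Ioc)]
    refine Finset.sum_congr rfl (fun k _ => ?_)
    rw [integral_div, ← intervalIntegral.integral_of_le hr]
    rw [intervalIntegral.integral_comp_sub_left (fun x => x ^ k) r]
    simp only [sub_self, sub_zero]
    rw [integral_pow]
    rw [zero_pow (Nat.succ_ne_zero k)]
    field_simp; simp
  have hsum : l * (∑ k ∈ Finset.range n, r ^ (k+1) / (((k+1).factorial : ℝ) * l ^ (k+1)))
      = ∑ k ∈ Finset.range n, r ^ (k+1) / ((k+1) * ((k.factorial : ℝ) * l ^ k)) := by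
    rw [Finset.mul_sum]
    refine Finset.sum_congr rfl fun k _ => ?_
    rw [Nat.factorial_succ]
    have hk : ((k:ℝ) + 1) ≠ 0 := by positivity
    have hf : ((k.factorial : ℝ)) ≠ 0 := by positivity
    have hlk : l ^ k ≠ 0 := by positivity
    have hl0 : l ≠ 0 := ne_of_gt hl
    push_cast
    field_simp
    ring
  rw [h1, h2, tailSum, Finset.sum_range_succ', ← hsum]
  simp only [pow_zero, Nat.factorial_zero, Nat.cast_one, mul_one, one_mul, div_one,
    Nat.cast_ofNat, Nat.cast_add]
  ring


lemma pi_tail {l : ℝ} (hl : 0 < l) (n : ℕ) (r : ℝ) :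
    Measure.pi (fun _ : Fin n => laplaceMeasure l) {y | r < ∑ i, |y i|}
      = ENNReal.ofReal (q l n r) := by
  haveI := isProbabilityMeasure_laplace hl
  induction n generalizing r with
  | zero =>
      rcases le_or_gt 0 r with hr | hr
      · have hempty : {y : Fin 0 → ℝ | r < ∑ i, |y i|} = (∅ : Set (Fin 0 → ℝ)) := by
          ext y; simp [not_lt.2 hr]
        rw [hempty, measure_empty, q, if_pos hr, tailSum]
        simp
      · have huniv : {y : Fin 0 → ℝ | r < ∑ i, |y i|} = univ := by
          ext y; simp [hr]
        rw [huniv, measure_univ, q, if_neg (not_le.2 hr)]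
        simp
  | succ n ih =>
      rcases lt_or_ge r 0 with hr | hr
      · have huniv : {y : Fin (n+1) → ℝ | r < ∑ i, |y i|} = univ := by
          ext y
          simp only [mem_setOf_eq, mem_univ, iff_true]
          exact lt_of_lt_of_le hr (Finset.sum_nonneg fun i _ => abs_nonneg _)
        rw [huniv, measure_univ, q, if_neg (not_le.2 hr)]; simp
      · have hT : MeasurableSet {p : ℝ × (Fin n → ℝ) | r - |p.1| < ∑ j, |p.2 j|} := by
          have h1 : Measurable fun p : ℝ × (Fin n → ℝ) => r - |p.1| :=
            (measurable_fst.abs).const_sub r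
          have h2 : Measurable fun p : ℝ × (Fin n → ℝ) => ∑ j, |p.2 j| :=
            Finset.measurable_sum _ fun j _ => ((measurable_pi_apply j).comp measurable_snd).abs
          exact measurableSet_lt h1 h2
        have hpre : (MeasurableEquiv.piFinSuccAbove (fun _ : Fin (n+1) => ℝ) 0) ⁻¹'
            {p : ℝ × (Fin n → ℝ) | r - |p.1| < ∑ j, |p.2 j|}
            = {y : Fin (n+1) → ℝ | r < ∑ i, |y i|} := by
          ext y
          simp only [mem_preimage, MeasurableEquiv.piFinSuccAbove_apply, mem_setOf_eq,
            Fin.zero_succAbove, Fin.insertNthEquiv, Equiv.coe_fn_symm_mk]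
          rw [Fin.sum_univ_succ, sub_lt_iff_lt_add']
          simp [Fin.removeNth, Fin.zero_succAbove]
        have hmp := (measurePreserving_piFinSuccAbove (fun _ : Fin (n+1) => laplaceMeasure l) 0)
        have hstep := hmp.measure_preimage hT.nullMeasurableSet
        rw [hpre] at hstep
        rw [hstep, Measure.prod_apply hT]
        have hfiber : ∀ t : ℝ, (Prod.mk t ⁻¹' {p : ℝ × (Fin n → ℝ) | r - |p.1| < ∑ j, |p.2 j|})
            = {z : Fin n → ℝ | r - |t| < ∑ j, |z j|} := fun t => rfl
        simp_rw [hfiber, ih]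
        have hg : Measurable fun t : ℝ => ENNReal.ofReal (q l n (r - |t|)) :=
          ENNReal.measurable_ofReal.comp ((measurable_q n).comp
            (measurable_const.sub measurable_abs))
        rw [laplaceMeasure, lintegral_withDensity_eq_lintegral_mul _ (by fun_prop) hg]
        have heq : ∀ t : ℝ,
            ((fun x => ENNReal.ofReal ((2 * l)⁻¹ * Real.exp (-|x| / l))) *
              fun t => ENNReal.ofReal (q l n (r - |t|))) t
            = ENNReal.ofReal ((2 * l)⁻¹ * Real.exp (-|t| / l) * q l n (r - |t|)) := by
          intro t
          simp only [Pi.mul_apply]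
          rw [← ENNReal.ofReal_mul (by positivity)]
        simp_rw [heq]
        have hint : Integrable (fun t : ℝ => (2 * l)⁻¹ * Real.exp (-|t| / l) * q l n (r - |t|)) := by
          refine (integrable_lapD hl).mono' ?_ ?_
          · have : Continuous (fun t : ℝ => (2 * l)⁻¹ * Real.exp (-|t| / l)) := by fun_prop
            exact (this.measurable.mul ((measurable_q n).comp
              ((measurable_const.sub measurable_abs)))).aestronglyMeasurable
          · filter_upwards with t
            have h0 : 0 ≤ (2 * l)⁻¹ * Real.exp (-|t| / l) := by positivity
            rw [Real.norm_eq_abs, abs_of_nonneg (mul_nonneg h0 (q_nonneg hl _ _))]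
            calc (2 * l)⁻¹ * Real.exp (-|t| / l) * q l n (r - |t|)
                ≤ (2 * l)⁻¹ * Real.exp (-|t| / l) * 1 :=
                  mul_le_mul_of_nonneg_left (q_le_one hl _ _) h0
              _ = _ := mul_one _
        rw [← ofReal_integral_eq_lintegral_ofReal hint
          (by filter_upwards with t
              exact mul_nonneg (by positivity) (q_nonneg hl _ _))]
        congr 1
        have habs : ∫ t : ℝ, (2 * l)⁻¹ * Real.exp (-|t| / l) * q l n (r - |t|)
            = 2 * ∫ s in Ioi (0:ℝ), (2 * l)⁻¹ * Real.exp (-s / l) * q l n (r - s) :=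
          integral_comp_abs (f := fun s => (2 * l)⁻¹ * Real.exp (-s / l) * q l n (r - s))
        rw [habs]
        simp_rw [mul_assoc, integral_const_mul]
        rw [key_integral hl n hr, q, if_pos hr]
        field_simp

variable {m n : ℕ} (A : Matrix (Fin m) (Fin n) ℝ)

def Vsub : Submodule ℝ (EuclideanSpace ℝ (Fin n)) where
  carrier := {z | A.mulVec z = 0}
  add_mem' := by
    intro a b ha hb
    simp only [mem_setOf_eq] at *
    show A.mulVec (a + b) = 0
    rw [Matrix.mulVec_add, ha, hb, add_zero]
  zero_mem' := by
    show A.mulVec 0 = 0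
    exact Matrix.mulVec_zero A
  smul_mem' := by
    intro c z hz
    simp only [mem_setOf_eq] at *
    show A.mulVec (c • z) = 0
    rw [Matrix.mulVec_smul, hz, smul_zero]

noncomputable def projV (z : EuclideanSpace ℝ (Fin n)) : EuclideanSpace ℝ (Fin n) :=
  ((Vsub A).orthogonalProjectionOnto z : EuclideanSpace ℝ (Fin n))

lemma projV_mem (z : EuclideanSpace ℝ (Fin n)) : A.mulVec (projV A z) = 0 :=
  ((Vsub A).orthogonalProjectionOnto z).2

lemma projV_neg (z : EuclideanSpace ℝ (Fin n)) : projV A (-z) = - projV A z := by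
  unfold projV; rw [map_neg]; rfl

lemma projV_norm_le (z : EuclideanSpace ℝ (Fin n)) : ‖projV A z‖ ≤ ‖z‖ := by
  have h := ((Vsub A).orthogonalProjectionOnto).le_opNorm z
  have h2 := Submodule.orthogonalProjectionOnto_norm_le (Vsub A)
  calc ‖projV A z‖ = ‖(Vsub A).orthogonalProjectionOnto z‖ := rfl
    _ ≤ ‖(Vsub A).orthogonalProjectionOnto‖ * ‖z‖ := h
    _ ≤ 1 * ‖z‖ := mul_le_mul_of_nonneg_right h2 (norm_nonneg z)
    _ = ‖z‖ := one_mul _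

lemma projV_min (z : EuclideanSpace ℝ (Fin n)) (w : EuclideanSpace ℝ (Fin n))
    (hw : A.mulVec w = 0) : ‖z - projV A z‖ ≤ ‖z - w‖ := by
  rw [show projV A z = (((Vsub A).orthogonalProjectionOnto z : Vsub A) : EuclideanSpace ℝ (Fin n)) from rfl]
  rw [← Submodule.starProjection_apply, Submodule.starProjection_minimal]
  exact ciInf_le ⟨0, fun c ⟨v, hv⟩ => hv ▸ norm_nonneg _⟩ (⟨w, hw⟩ : Vsub A)

lemma l2norm_eq (u : EuclideanSpace ℝ (Fin n)) : l2norm u = ‖u‖ := by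
  rw [EuclideanSpace.norm_eq]
  unfold l2norm
  congr 1
  exact Finset.sum_congr rfl fun i _ => by rw [Real.norm_eq_abs, sq_abs]

lemma coord_le_norm (u : EuclideanSpace ℝ (Fin n)) (i : Fin n) : |u i| ≤ ‖u‖ := by
  rw [EuclideanSpace.norm_eq]
  simp only [Real.norm_eq_abs]
  have h1 : |u i| = Real.sqrt (|u i| ^ 2) := by rw [Real.sqrt_sq_eq_abs, abs_abs]
  rw [h1]
  apply Real.sqrt_le_sqrt
  exact Finset.single_le_sum (f := fun j => |u j| ^ 2) (fun j _ => by positivity) (Finset.mem_univ i)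

lemma norm_le_l1 (u : EuclideanSpace ℝ (Fin n)) : ‖u‖ ≤ ∑ i, |u i| := by
  rw [EuclideanSpace.norm_eq]
  simp only [Real.norm_eq_abs]
  have h2 : ∑ i, |u i| ^ 2 ≤ (∑ i, |u i|) ^ 2 := by
    rw [pow_two (∑ i, |u i|), Finset.mul_sum]
    refine Finset.sum_le_sum fun i _ => ?_
    have hs := Finset.single_le_sum (f := fun j => |u j|) (fun j _ => abs_nonneg _)
      (Finset.mem_univ i)
    calc |u i| ^ 2 = |u i| * |u i| := pow_two _
      _ ≤ (∑ j, |u j|) * |u i| := mul_le_mul_of_nonneg_right hs (abs_nonneg _)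
  calc Real.sqrt (∑ i, |u i| ^ 2) ≤ Real.sqrt ((∑ i, |u i|) ^ 2) := Real.sqrt_le_sqrt h2
    _ = abs (∑ i, |u i|) := Real.sqrt_sq_eq_abs _
    _ = ∑ i, |u i| := abs_of_nonneg (Finset.sum_nonneg fun i _ => abs_nonneg _)

lemma min_unique {K : Set (EuclideanSpace ℝ (Fin n))} (hK : Convex ℝ K)
    {y v₁ v₂ : EuclideanSpace ℝ (Fin n)} (h₁ : v₁ ∈ K) (h₂ : v₂ ∈ K)
    (m₁ : ∀ v ∈ K, ‖v₁ - y‖ ≤ ‖v - y‖) (m₂ : ∀ v ∈ K, ‖v₂ - y‖ ≤ ‖v - y‖) : v₁ = v₂ := by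
  have hmid : (1/2 : ℝ) • v₁ + (1/2 : ℝ) • v₂ ∈ K :=
    hK h₁ h₂ (by norm_num) (by norm_num) (by norm_num)
  have e1 : ‖v₁ - y‖ ≤ ‖(1/2 : ℝ) • v₁ + (1/2 : ℝ) • v₂ - y‖ := m₁ _ hmid
  have e2 : ‖v₂ - y‖ ≤ ‖(1/2 : ℝ) • v₁ + (1/2 : ℝ) • v₂ - y‖ := m₂ _ hmid
  have hpar := parallelogram_law_with_norm ℝ (v₁ - y) (v₂ - y)
  have hsum : (v₁ - y) + (v₂ - y) = (2:ℝ) • ((1/2 : ℝ) • v₁ + (1/2 : ℝ) • v₂ - y) := by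
    module
  have hdiff : (v₁ - y) - (v₂ - y) = v₁ - v₂ := by module
  rw [hsum, hdiff, norm_smul] at hpar
  simp only [Real.norm_ofNat] at hpar
  have hz : ‖v₁ - v₂‖ = 0 := by nlinarith [norm_nonneg (v₁ - v₂), norm_nonneg (v₁ - y), norm_nonneg (v₂ - y), norm_nonneg ((1/2 : ℝ) • v₁ + (1/2 : ℝ) • v₂ - y)]
  exact sub_eq_zero.1 (norm_eq_zero.1 hz)


lemma convex_aff (b : Fin m → ℝ) : Convex ℝ {v : EuclideanSpace ℝ (Fin n) | A.mulVec v = b} := by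
  intro u hu v hv a c ha hc hac
  simp only [mem_setOf_eq] at *
  show A.mulVec (a • u + c • v) = b
  rw [Matrix.mulVec_add, Matrix.mulVec_smul, Matrix.mulVec_smul, hu, hv, ← add_smul, hac, one_smul]

/-- If the noise is small in ℓ¹ norm, the projection onto the constrained set agrees with
`x` plus the orthogonal projection of the noise onto the kernel. -/
lemma proj_eq {b : Fin m → ℝ} {x : Fin n → ℝ} (hxK : A.mulVec x = b)
    {Kp : Set (Fin n → ℝ)} (hKp : Kp = {v | A.mulVec v = b ∧ ∀ i, 0 ≤ v i})
    (Pp : (Fin n → ℝ) → (Fin n → ℝ))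
    (hPp : ∀ y, Pp y ∈ Kp ∧ ∀ v ∈ Kp, l2norm (Pp y - y) ≤ l2norm (v - y))
    {r : ℝ} (hrle : ∀ i, r ≤ x i)
    {z : Fin n → ℝ} (hz : ∑ i, |z i| ≤ r) :
    Pp (x + z) = fun i => x i + projV A (WithLp.toLp 2 z) i := by
  set xE : EuclideanSpace ℝ (Fin n) := WithLp.toLp 2 x with hxE
  set zE : EuclideanSpace ℝ (Fin n) := WithLp.toLp 2 z with hzE
  set w : EuclideanSpace ℝ (Fin n) := xE + projV A zE with hw
  set y : EuclideanSpace ℝ (Fin n) := xE + zE with hy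
  set PE : EuclideanSpace ℝ (Fin n) := WithLp.toLp 2 (Pp (x + z)) with hPE
  replace hxK : A.mulVec xE = b := hxK
  have hwK : A.mulVec w = b := by
    show A.mulVec (xE + projV A zE) = b
    rw [Matrix.mulVec_add, projV_mem, hxK, add_zero]
  have hwpos : ∀ i, 0 ≤ w i := by
    intro i
    have h1 : |projV A zE i| ≤ r := by
      calc |projV A zE i| ≤ ‖projV A zE‖ := coord_le_norm _ _
        _ ≤ ‖zE‖ := projV_norm_le _ _
        _ ≤ ∑ j, |zE j| := norm_le_l1 _
        _ ≤ r := hz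
    have h2 : w i = x i + projV A zE i := rfl
    rw [h2]
    have h6 := hrle i
    have h7 := (abs_le.1 h1).1
    linarith
  have hwKp : w.ofLp ∈ Kp := by rw [hKp]; exact ⟨hwK, hwpos⟩
  have hPpKp := (hPp (x + z)).1
  have hPpaff : A.mulVec PE = b := by
    rw [hKp] at hPpKp; exact hPpKp.1
  have hwmin : ∀ v ∈ {v : EuclideanSpace ℝ (Fin n) | A.mulVec v = b}, ‖w - y‖ ≤ ‖v - y‖ := by
    intro v hv
    have hv0 : A.mulVec (v - xE) = 0 := by
      show A.mulVec (v - xE) = 0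
      rw [Matrix.mulVec_sub, hv, hxK, sub_self]
    have h3 : w - y = -(zE - projV A zE) := by rw [hw, hy]; module
    have h4 : v - y = -(zE - (v - xE)) := by rw [hy]; module
    rw [h3, h4, norm_neg, norm_neg]
    exact projV_min A zE (v - xE) hv0
  have hPpmin : ∀ v ∈ {v : EuclideanSpace ℝ (Fin n) | A.mulVec v = b},
      ‖PE - y‖ ≤ ‖v - y‖ := by
    intro v hv
    have h5 : l2norm (PE - y) ≤ l2norm (w - y) := (hPp (x + z)).2 w hwKp
    rw [l2norm_eq (PE - y), l2norm_eq (w - y)] at h5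
    exact le_trans h5 (hwmin v hv)
  have hfin : PE = w := min_unique (convex_aff A b) (by exact hPpaff) (by exact hwK) hPpmin hwmin
  exact congrArg WithLp.ofLp hfin



lemma lap_map_neg (l : ℝ) : (laplaceMeasure l).map (fun a : ℝ => -a) = laplaceMeasure l := by
  ext s hs
  rw [Measure.map_apply measurable_neg hs, laplaceMeasure,
    withDensity_apply _ (measurable_neg hs), withDensity_apply _ hs]
  have hemb : MeasurableEmbedding (fun a : ℝ => -a) := (Homeomorph.neg ℝ).measurableEmbedding
  have hmp : MeasurePreserving (fun a : ℝ => -a) (volume : Measure ℝ) volume :=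
    ⟨measurable_neg, Measure.map_neg_eq_self _⟩
  have := hmp.setLIntegral_comp_preimage_emb hemb
    (fun t => ENNReal.ofReal ((2 * l)⁻¹ * Real.exp (-|t| / l))) s
  rw [← this]
  refine setLIntegral_congr_fun (measurable_neg hs) ?_
  intro t _
  simp [abs_neg]

lemma pi_map_neg {l : ℝ} (hl : 0 < l) (n : ℕ) :
    (Measure.pi (fun _ : Fin n => laplaceMeasure l)).map (fun y : Fin n → ℝ => -y)
      = Measure.pi (fun _ : Fin n => laplaceMeasure l) := by
  haveI := isProbabilityMeasure_laplace hl
  refine (Measure.pi_eq fun s hs => ?_).symm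
  rw [Measure.map_apply measurable_neg (MeasurableSet.univ_pi hs)]
  have hpre : (fun y : Fin n → ℝ => -y) ⁻¹' (univ.pi s)
      = univ.pi (fun i => (fun a : ℝ => -a) ⁻¹' s i) := by
    ext y; simp [Set.mem_pi]
  rw [hpre, Measure.pi_pi]
  refine Finset.prod_congr rfl fun i _ => ?_
  rw [← Measure.map_apply measurable_neg (hs i), lap_map_neg]

lemma joint_law {Ω : Type*} [MeasurableSpace Ω] (μ : Measure Ω) [IsProbabilityMeasure μ]
    {l : ℝ} (hl : 0 < l) {n : ℕ} (η : Fin n → Ω → ℝ)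
    (hmeas : ∀ i, Measurable (η i))
    (hindep : iIndepFun η μ)
    (hlap : ∀ i, μ.map (η i) = laplaceMeasure l) :
    μ.map (fun ω i => η i ω) = Measure.pi (fun _ : Fin n => laplaceMeasure l) := by
  haveI := isProbabilityMeasure_laplace hl
  refine (Measure.pi_eq fun s hs => ?_).symm
  rw [Measure.map_apply (measurable_pi_lambda _ fun i => hmeas i) (MeasurableSet.univ_pi hs)]
  have hpre : (fun ω i => η i ω) ⁻¹' (univ.pi s) = ⋂ i ∈ Finset.univ, (η i) ⁻¹' s i := by
    ext ω; simp [Set.mem_pi]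
  rw [hpre, hindep.measure_inter_preimage_eq_mul Finset.univ (fun i _ => hs i)]
  refine Finset.prod_congr rfl fun i _ => ?_
  rw [← Measure.map_apply (hmeas i) (hs i), hlap i]

lemma integral_odd {n : ℕ} {ν : Measure (Fin n → ℝ)} [IsFiniteMeasure ν]
    (hν : ν.map (fun y : Fin n → ℝ => -y) = ν) {g : (Fin n → ℝ) → ℝ}
    (hg : Integrable g ν) (hodd : ∀ z, g (-z) = - g z) : ∫ z, g z ∂ν = 0 := by
  have hmn : Measurable (fun y : Fin n → ℝ => -y) := measurable_neg
  have h1 : ∫ z, g (-z) ∂ν = ∫ z, g z ∂ν := by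
    conv_rhs => rw [← hν]
    rw [integral_map hmn.aemeasurable]
    rw [hν]
    exact hg.1
  simp only [hodd, integral_neg] at h1
  linarith

end BiasAux

open Set in
theorem bias_bound_nonneg_projection {Ω : Type*} [MeasurableSpace Ω]
    (μ : Measure Ω) [IsProbabilityMeasure μ] {n m : ℕ} (hn : 0 < n)
    (A : Matrix (Fin m) (Fin n) ℝ) (b : Fin m → ℝ)
    (x : Fin n → ℝ) (hxpos : ∀ i, 0 ≤ x i) (hxK : A.mulVec x = b)
    (Kp : Set (Fin n → ℝ)) (hKp : Kp = {v | A.mulVec v = b ∧ ∀ i, 0 ≤ v i})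
    (hbdd : Bornology.IsBounded Kp)
    (C : ℝ) (hC : IsLUB {c | ∃ v ∈ Kp, c = ⨆ i, |v i - x i|} C)
    (l : ℝ) (hl : 0 < l)
    (η : Fin n → Ω → ℝ)
    (hmeas : ∀ i, Measurable (η i))
    (hindep : iIndepFun η μ)
    (hlap : ∀ i, μ.map (η i) = laplaceMeasure l)
    (Pp : (Fin n → ℝ) → (Fin n → ℝ))
    (hPp : ∀ y, Pp y ∈ Kp ∧ ∀ v ∈ Kp, l2norm (Pp y - y) ≤ l2norm (v - y)) :
    (⨆ i, |(∫ ω, (Pp (fun j => x j + η j ω) - x) ∂μ) i|) ≤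
      C * Real.exp (-(⨅ i, x i) / l) *
        ∑ k ∈ Finset.range n, (⨅ i, x i) ^ k / (k.factorial * l ^ k) := by
  classical
  haveI : Nonempty (Fin n) := Fin.pos_iff_nonempty.1 hn
  set r : ℝ := ⨅ i, x i with hr
  have hr0 : 0 ≤ r := le_ciInf fun i => hxpos i
  have hrle : ∀ i, r ≤ x i := fun i => ciInf_le (Set.Finite.bddBelow (Set.finite_range _)) i
  have hxKp : x ∈ Kp := by rw [hKp]; exact ⟨hxK, hxpos⟩
  have hC0 : 0 ≤ C := by
    have h0 : (0:ℝ) ∈ {c | ∃ v ∈ Kp, c = ⨆ i, |v i - x i|} := ⟨x, hxKp, by simp⟩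
    exact hC.1 h0
  have habsC : ∀ v ∈ Kp, ∀ i, |v i - x i| ≤ C := by
    intro v hv i
    exact le_trans (le_ciSup (f := fun j => |v j - x j|)
      (Set.Finite.bddAbove (Set.finite_range _)) i) (hC.1 ⟨v, hv, rfl⟩)
  have hsum0 : 0 ≤ ∑ k ∈ Finset.range n, r ^ k / (k.factorial * l ^ k) :=
    Finset.sum_nonneg fun k _ => by positivity
  have hRHS0 : 0 ≤ C * Real.exp (-r / l) *
      ∑ k ∈ Finset.range n, r ^ k / (k.factorial * l ^ k) := by positivity
  by_cases hFm : AEStronglyMeasurable (fun ω => Pp (fun j => x j + η j ω) - x) μ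
  case neg =>
    rw [integral_undef (fun h => hFm h.1)]
    simpa using hRHS0
  case pos =>
  set X : Ω → (Fin n → ℝ) := fun ω j => η j ω with hX
  have hXm : Measurable X := measurable_pi_lambda _ fun j => hmeas j
  haveI := BiasAux.isProbabilityMeasure_laplace hl
  set ν : Measure (Fin n → ℝ) := Measure.pi (fun _ : Fin n => laplaceMeasure l) with hν
  haveI : IsProbabilityMeasure ν := by rw [hν]; infer_instance
  have hlaw : μ.map X = ν := BiasAux.joint_law μ hl η hmeas hindep hlap
  set F : Ω → (Fin n → ℝ) := fun ω => Pp (fun j => x j + η j ω) - x with hF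
  have hFC : ∀ ω i, |F ω i| ≤ C := by
    intro ω i
    have h1 : Pp (fun j => x j + η j ω) ∈ Kp := (hPp _).1
    have h2 : F ω i = Pp (fun j => x j + η j ω) i - x i := rfl
    rw [h2]; exact habsC _ h1 i
  have hFint : Integrable F μ := by
    refine (integrable_const C).mono' hFm ?_
    filter_upwards with ω
    rw [pi_norm_le_iff_of_nonneg hC0]
    intro i
    rw [Real.norm_eq_abs]; exact hFC ω i
  have hcoord : ∀ i, (∫ ω, F ω ∂μ) i = ∫ ω, F ω i ∂μ := by
    intro i
    exact ((ContinuousLinearMap.proj (R := ℝ) (φ := fun _ : Fin n => ℝ) i).integral_comp_comm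
      hFint).symm
  have hsum_meas : Measurable (fun z : Fin n → ℝ => ∑ j, |z j|) :=
    Finset.measurable_sum _ fun j _ => (measurable_pi_apply j).abs
  set Bc : Set (Fin n → ℝ) := {z | r < ∑ j, |z j|} with hBc
  have hBcm : MeasurableSet Bc := measurableSet_lt measurable_const hsum_meas
  have htail : (μ (X ⁻¹' Bc)).toReal = BiasAux.tailSum l n r := by
    rw [← Measure.map_apply hXm hBcm, hlaw, hν, hBc, BiasAux.pi_tail hl n r,
      ENNReal.toReal_ofReal (BiasAux.q_nonneg hl n r)]
    rw [BiasAux.q, if_pos hr0]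
  have key : ∀ i, |∫ ω, F ω i ∂μ| ≤ C * BiasAux.tailSum l n r := by
    intro i
    set g : (Fin n → ℝ) → ℝ :=
      fun z => if ∑ j, |z j| ≤ r then BiasAux.projV A (WithLp.toLp 2 z) i else 0 with hg
    have hgcont : Continuous (fun z : Fin n → ℝ => BiasAux.projV A (WithLp.toLp 2 z) i) := by
      have h1 : Continuous ((BiasAux.Vsub A).subtypeL.comp
          (BiasAux.Vsub A).orthogonalProjectionOnto) := ContinuousLinearMap.continuous _
      have h2 := PiLp.continuous_ofLp 2 (fun _ : Fin n => ℝ)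
      have h3 := PiLp.continuous_toLp 2 (fun _ : Fin n => ℝ)
      exact (continuous_apply i).comp ((h2.comp h1).comp h3)
    have hgm : Measurable g :=
      Measurable.ite (measurableSet_le hsum_meas measurable_const)
        hgcont.measurable measurable_const
    have hgbd : ∀ z, |g z| ≤ r := by
      intro z
      simp only [hg]
      split
      case isTrue h =>
        have e1 := BiasAux.coord_le_norm (BiasAux.projV A (WithLp.toLp 2 z)) i
        have e2 := BiasAux.projV_norm_le A (WithLp.toLp 2 z)
        have e3 := BiasAux.norm_le_l1 (n := n) (WithLp.toLp 2 z)
        have e4 : |BiasAux.projV A (WithLp.toLp 2 z) i| ≤ |BiasAux.projV A (WithLp.toLp 2 z) i| := le_refl _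
        linarith
      case isFalse h => simpa using hr0
    have hgodd : ∀ z, g (-z) = - g z := by
      intro z
      simp only [hg]
      have habs : ∀ j, |(-z) j| = |z j| := fun j => by simp
      simp_rw [habs]
      split
      · rw [WithLp.toLp_neg, BiasAux.projV_neg]
        rfl
      · simp
    have hgint : Integrable g ν :=
      (integrable_const r).mono' hgm.aestronglyMeasurable
        (by filter_upwards with z; rw [Real.norm_eq_abs]; exact hgbd z)
    have hgX_int : Integrable (fun ω => g (X ω)) μ :=
      (integrable_const r).mono' (hgm.comp hXm).aestronglyMeasurable
        (by filter_upwards with ω; rw [Real.norm_eq_abs]; exact hgbd (X ω))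
    have hg0 : ∫ ω, g (X ω) ∂μ = 0 := by
      have h1 : ∫ z, g z ∂ν = ∫ ω, g (X ω) ∂μ := by
        rw [← hlaw, integral_map hXm.aemeasurable
          (by rw [hlaw]; exact hgm.aestronglyMeasurable)]
      rw [← h1]
      refine BiasAux.integral_odd ?_ hgint hgodd
      rw [hν]
      exact BiasAux.pi_map_neg hl n
    have hFim : AEStronglyMeasurable (fun ω => F ω i) μ :=
      (ContinuousLinearMap.proj (R := ℝ) (φ := fun _ : Fin n => ℝ)
        i).continuous.comp_aestronglyMeasurable hFm
    have hFiint : Integrable (fun ω => F ω i) μ :=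
      (integrable_const C).mono' hFim
        (by filter_upwards with ω; rw [Real.norm_eq_abs]; exact hFC ω i)
    have h2int : Integrable (fun ω => F ω i - g (X ω)) μ := hFiint.sub hgX_int
    have hptw : ∀ ω, |F ω i - g (X ω)| ≤ (X ⁻¹' Bc).indicator (fun _ => C) ω := by
      intro ω
      by_cases hball : ∑ j, |X ω j| ≤ r
      · have hproj := BiasAux.proj_eq A hxK hKp Pp hPp hrle hball
        have hxz : (fun j => x j + η j ω) = x + X ω := rfl
        have hFi : F ω i = BiasAux.projV A (WithLp.toLp 2 (X ω)) i := by
          show Pp (fun j => x j + η j ω) i - x i = _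
          rw [hxz, hproj]
          simp
        have hgval : g (X ω) = BiasAux.projV A (WithLp.toLp 2 (X ω)) i := by simp only [hg]; exact if_pos hball
        have hind : (X ⁻¹' Bc).indicator (fun _ => C) ω = 0 := by
          apply Set.indicator_of_notMem
          simp only [Set.mem_preimage, hBc, mem_setOf_eq, not_lt]
          exact hball
        rw [hFi, hgval, sub_self, abs_zero, hind]
      · have hgval : g (X ω) = 0 := by simp only [hg]; exact if_neg hball
        have hind : (X ⁻¹' Bc).indicator (fun _ => C) ω = C := by
          apply Set.indicator_of_mem
          simp only [Set.mem_preimage, hBc, mem_setOf_eq]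
          exact not_le.1 hball
        rw [hgval, sub_zero, hind]
        exact hFC ω i
    have hsplit : ∫ ω, F ω i ∂μ = ∫ ω, g (X ω) ∂μ + ∫ ω, (F ω i - g (X ω)) ∂μ := by
      rw [← integral_add hgX_int h2int]
      congr 1
      funext ω
      ring
    have hindint : Integrable ((X ⁻¹' Bc).indicator (fun _ => C)) μ :=
      (integrable_const C).indicator (hXm hBcm)
    have habs2 : |∫ ω, (F ω i - g (X ω)) ∂μ| ≤ C * (μ (X ⁻¹' Bc)).toReal := by
      calc |∫ ω, (F ω i - g (X ω)) ∂μ| ≤ ∫ ω, |F ω i - g (X ω)| ∂μ :=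
            by
              have hni := norm_integral_le_integral_norm (fun ω => F ω i - g (X ω)) (μ := μ)
              simpa [Real.norm_eq_abs] using hni
        _ ≤ ∫ ω, (X ⁻¹' Bc).indicator (fun _ => C) ω ∂μ :=
            integral_mono h2int.abs hindint hptw
        _ = (μ (X ⁻¹' Bc)).toReal • C := integral_indicator_const C (hXm hBcm)
        _ = C * (μ (X ⁻¹' Bc)).toReal := by rw [smul_eq_mul]; ring
    rw [hsplit, hg0, zero_add]
    rw [htail] at habs2
    exact habs2
  refine ciSup_le fun i => ?_
  rw [hcoord i]
  calc |∫ ω, F ω i ∂μ| ≤ C * BiasAux.tailSum l n r := key i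
    _ = C * Real.exp (-r / l) * ∑ k ∈ Finset.range n, r ^ k / (k.factorial * l ^ k) := by
        rw [BiasAux.tailSum]; ring
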